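/- Let φ be an ordering of a graph G in which two non-adjacent vertices u and v occupy consecutive positions i and i+1 and have equal right degrees. Then the ordering φ* obtained by swapping u and v satisfies μ_G(φ*) = μ_G(φ). -/

import Mathlib

open Finset

variable {V : Type*} [Fintype V] [DecidableEq V]

/-- MSVC cost of an ordering `φ` (positions are `(φ v : ℕ) + 1`, i.e. in `{1,…,n}`). -/
def msvcCost {n : ℕ} (G : SimpleGraph V) [DecidableRel G.Adj] (φ : V ≃ Fin n) : ℕ :=
  ∑ e ∈ G.edgeFinset,
    Sym2.lift ⟨fun u v => min ((φ u : ℕ) + 1) ((φ v : ℕ) + 1), fun _ _ => min_comm _ _⟩ e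

/-- Right degree of `v` in the ordering `φ`. -/
def rightDeg {n : ℕ} (G : SimpleGraph V) [DecidableRel G.Adj] (φ : V ≃ Fin n) (v : V) : ℕ :=
  ((G.neighborFinset v).filter fun u => φ v < φ u).card

lemma cost_eq_vertexSum {n : ℕ} (G : SimpleGraph V) [DecidableRel G.Adj] (φ : V ≃ Fin n) :
    msvcCost G φ = ∑ v : V, ((φ v : ℕ) + 1) * rightDeg G φ v := by
  classical
  unfold msvcCost rightDeg
  have h : ∀ v : V, ((φ v : ℕ) + 1) * ((G.neighborFinset v).filter fun u => φ v < φ u).card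
      = ∑ _w ∈ (G.neighborFinset v).filter (fun u => φ v < φ u), ((φ v : ℕ) + 1) := by
    intro v; rw [Finset.sum_const, smul_eq_mul, mul_comm]
  simp_rw [h]
  rw [Finset.sum_sigma']
  symm
  apply Finset.sum_bij (i := fun (p : (_ : V) × V) _ => Sym2.mk p.1 p.2)
  · rintro ⟨a, b⟩ hp
    simp only [Finset.mem_sigma, Finset.mem_filter, SimpleGraph.mem_neighborFinset] at hp
    simpa [SimpleGraph.mem_edgeFinset] using hp.2.1
  · rintro ⟨a₁, b₁⟩ hp₁ ⟨a₂, b₂⟩ hp₂ heq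
    simp only [Finset.mem_sigma, Finset.mem_filter, SimpleGraph.mem_neighborFinset] at hp₁ hp₂
    rw [Sym2.mk_eq_mk_iff (p := (a₁, b₁)) (q := (a₂, b₂))] at heq
    rcases heq with heq | heq
    · simpa using heq
    · exfalso
      simp only [Prod.swap_prod_mk, Prod.mk.injEq] at heq
      have h1 := hp₁.2.2
      have h2 := hp₂.2.2
      rw [heq.1, heq.2] at h1
      exact absurd (h1.trans h2) (lt_irrefl _)
  · intro e he
    induction e with
    | _ a b =>
      rw [SimpleGraph.mem_edgeFinset, SimpleGraph.mem_edgeSet] at he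
      have hab : φ a ≠ φ b := fun h => G.ne_of_adj he (φ.injective h)
      rcases lt_or_gt_of_ne hab with hlt | hgt
      · exact ⟨⟨a, b⟩, by simp [Finset.mem_sigma, he, hlt], rfl⟩
      · exact ⟨⟨b, a⟩, by simp [Finset.mem_sigma, he.symm, hgt], Sym2.eq_swap⟩
  · rintro ⟨a, b⟩ hp
    simp only [Finset.mem_sigma, Finset.mem_filter, SimpleGraph.mem_neighborFinset] at hp
    have : (φ a : ℕ) < (φ b : ℕ) := hp.2.2
    simp only [Sym2.lift_mk]
    omega

lemma rd_swap {n : ℕ} (G : SimpleGraph V) [DecidableRel G.Adj] (φ : V ≃ Fin n)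
    (u v : V) (hne : u ≠ v) (hnadj : ¬ G.Adj u v) (hconsec : (φ v : ℕ) = (φ u : ℕ) + 1)
    (w : V) : rightDeg G ((Equiv.swap u v).trans φ) w = rightDeg G φ w := by
  classical
  unfold rightDeg
  congr 1
  apply Finset.filter_congr
  intro x hx
  rw [SimpleGraph.mem_neighborFinset] at hx
  have hxw : x ≠ w := fun h => G.irrefl (h ▸ hx)
  have hval : ∀ a b : V, a ≠ b → (φ a : ℕ) ≠ (φ b : ℕ) := by
    intro a b hab h
    exact hab (φ.injective (Fin.val_injective h))
  simp only [Equiv.trans_apply, Fin.lt_def]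
  by_cases hwu : w = u
  · have hxv : x ≠ v := fun h => hnadj ((hwu ▸ h ▸ hx : G.Adj u v))
    have hxu : x ≠ u := hwu ▸ hxw
    rw [hwu, Equiv.swap_apply_left, Equiv.swap_apply_of_ne_of_ne hxu hxv]
    have h1 := hval x u hxu
    have h2 := hval x v hxv
    omega
  · by_cases hwv : w = v
    · have hxu : x ≠ u := fun h => hnadj ((hwv ▸ h ▸ hx.symm : G.Adj u v))
      have hxv : x ≠ v := hwv ▸ hxw
      rw [hwv, Equiv.swap_apply_right, Equiv.swap_apply_of_ne_of_ne hxu hxv]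
      have h1 := hval x u hxu
      have h2 := hval x v hxv
      omega
    · rw [Equiv.swap_apply_of_ne_of_ne hwu hwv]
      by_cases hxu : x = u
      · rw [hxu, Equiv.swap_apply_left]
        have h1 := hval w u hwu
        have h2 := hval w v hwv
        omega
      · by_cases hxv : x = v
        · rw [hxv, Equiv.swap_apply_right]
          have h1 := hval w u hwu
          have h2 := hval w v hwv
          omega
        · rw [Equiv.swap_apply_of_ne_of_ne hxu hxv]

theorem stmt4 {n : ℕ} (G : SimpleGraph V) [DecidableRel G.Adj] (φ : V ≃ Fin n)
    (u v : V) (hne : u ≠ v) (hnadj : ¬ G.Adj u v) (hconsec : (φ v : ℕ) = (φ u : ℕ) + 1)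
    (hrd : rightDeg G φ u = rightDeg G φ v) :
    msvcCost G ((Equiv.swap u v).trans φ) = msvcCost G φ := by
  classical
  rw [cost_eq_vertexSum, cost_eq_vertexSum]
  rw [← Equiv.sum_comp (Equiv.swap u v)
    (fun w => ((((Equiv.swap u v).trans φ) w : ℕ) + 1) *
      rightDeg G ((Equiv.swap u v).trans φ) w)]
  apply Finset.sum_congr rfl
  intro w _
  simp only [Equiv.trans_apply, Equiv.swap_apply_self,
    rd_swap G φ u v hne hnadj hconsec]
  congr 1
  by_cases hwu : w = u
  · subst hwu; rw [Equiv.swap_apply_left]; exact hrd.symm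
  · by_cases hwv : w = v
    · subst hwv; rw [Equiv.swap_apply_right]; exact hrd
    · rw [Equiv.swap_apply_of_ne_of_ne hwu hwv]
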